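/- Let Z be a locally Noetherian scheme with a 1-canonical module ω, M a coherent sheaf on Z, and (−)^∨ = Hom_{O_Z}(−, ω). If M is isomorphic to a submodule of a finite direct sum of copies of ω, then M satisfies (S'_1) and Supp M ⊆ Supp ω. Moreover, for any coherent N, the dual N^∨ embeds (affine-locally) into a finite direct sum of copies of ω. -/

import Mathlib

open CategoryTheory

/-- Depth via local cohomology at the maximal ideal (following the paper). -/
noncomputable def localDepth (A : Type) [CommRing A] [IsLocalRing A]
    (M : Type) [AddCommGroup M] [Module A M] : ℕ∞ :=
  sInf {n : ℕ∞ | ∃ m : ℕ, n = (m : ℕ∞) ∧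
    Nontrivial ((localCohomology (IsLocalRing.maximalIdeal A) m).obj (ModuleCat.of A M))}

/-- `depth_{A_P} M_P` for a prime `P`. -/
noncomputable def primeLocalDepth (A : Type) [CommRing A] (P : Ideal A)
    (hP : P.IsPrime) (M : Type) [AddCommGroup M] [Module A M] : ℕ∞ :=
  haveI := hP
  localDepth (Localization.AtPrime P) (LocalizedModule P.primeCompl M)

/-- `dim A_P`, the height of the prime `P`. -/
noncomputable def primeKrullDim (A : Type) [CommRing A] (P : Ideal A)
    (hP : P.IsPrime) : WithBot ℕ∞ :=
  haveI := hP
  ringKrullDim (Localization.AtPrime P)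

/-- `dim M_P`, the dimension of the localized module. -/
noncomputable def primeModuleDim (A : Type) [CommRing A] (P : Ideal A)
    (hP : P.IsPrime) (M : Type) [AddCommGroup M] [Module A M] : WithBot ℕ∞ :=
  haveI := hP
  Order.krullDim
    (Module.support (Localization.AtPrime P) (LocalizedModule P.primeCompl M))

/-- Serre's condition `(S_n)`: `depth M_P ≥ min (n, dim M_P)` for all primes `P`. -/
def SerreS (A : Type) [CommRing A] (M : Type) [AddCommGroup M] [Module A M]
    (n : ℕ) : Prop :=
  ∀ (P : Ideal A) (hP : P.IsPrime),
    min (n : WithBot ℕ∞) (primeModuleDim A P hP M) ≤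
      (primeLocalDepth A P hP M : WithBot ℕ∞)

/-- Serre's condition `(S'_n)`: `depth M_P ≥ min (n, dim A_P)` for all primes `P`. -/
def SerreS' (A : Type) [CommRing A] (M : Type) [AddCommGroup M] [Module A M]
    (n : ℕ) : Prop :=
  ∀ (P : Ideal A) (hP : P.IsPrime),
    min (n : WithBot ℕ∞) (primeKrullDim A P hP) ≤
      (primeLocalDepth A P hP M : WithBot ℕ∞)

/-- `E` is an injective hull of the residue field of the local ring `A`:
an injective module containing the residue field as an essential submodule. -/
def IsInjectiveHullOfResidueField (A : Type) [CommRing A] [IsLocalRing A]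
    (E : Type) [AddCommGroup E] [Module A E] : Prop :=
  Module.Injective A E ∧
    ∃ f : IsLocalRing.ResidueField A →ₗ[A] E, Function.Injective f ∧
      ∀ N : Submodule A E, N ≠ ⊥ → N ⊓ LinearMap.range f ≠ ⊥

/-- Aoyama's definition: a finite module `K` over a Noetherian local ring `A`
of dimension `d` is a canonical module if `K ⊗_A Â ≅ Hom_A(H^d_m(A), E)`,
where `E` is an injective hull of the residue field. -/
def IsCanonicalModuleLocal (A : Type) [CommRing A] [IsLocalRing A]
    (K : Type) [AddCommGroup K] [Module A K] : Prop :=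
  Module.Finite A K ∧
  ∃ (E : Type) (_ : AddCommGroup E) (_ : Module A E),
    IsInjectiveHullOfResidueField A E ∧
    Nonempty
      ((TensorProduct A K (AdicCompletion (IsLocalRing.maximalIdeal A) A)) ≃ₗ[A]
        (((localCohomology (IsLocalRing.maximalIdeal A)
            (WithTop.untopD 0 (WithBot.unbotD 0 (ringKrullDim A)))).obj (ModuleCat.of A A)) →ₗ[A] E))

/-- At the prime `P`, the localization `ω_P` is either zero or a canonical
module of the local ring `B_P`. -/
def ZeroOrCanonicalAt (B : Type) [CommRing B] (P : Ideal B) (hP : P.IsPrime)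
    (ω : Type) [AddCommGroup ω] [Module B ω] : Prop :=
  haveI := hP
  Subsingleton (LocalizedModule P.primeCompl ω) ∨
    IsCanonicalModuleLocal (Localization.AtPrime P) (LocalizedModule P.primeCompl ω)

/-- A finite module `ω` over a Noetherian ring `B` is `n`-canonical if it
satisfies `(S'_n)` and is zero or canonical at every prime of height `< n`. -/
def IsNCanonicalModule (B : Type) [CommRing B]
    (ω : Type) [AddCommGroup ω] [Module B ω] (n : ℕ) : Prop :=
  Module.Finite B ω ∧ SerreS' B ω n ∧
    ∀ (P : Ideal B) (hP : P.IsPrime),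
      primeKrullDim B P hP < (n : WithBot ℕ∞) → ZeroOrCanonicalAt B P hP ω

section Aux

open CategoryTheory Limits localCohomology


private theorem mapQ_one' {A : Type} [CommRing A] (I I' : Ideal A) (h : I ≤ I') :
    Submodule.mapQ I I' LinearMap.id h (1 : A ⧸ I) = 1 := by
  show Submodule.mapQ I I' LinearMap.id h (Submodule.Quotient.mk 1) = Submodule.Quotient.mk 1
  rw [Submodule.mapQ_apply]; rfl

theorem H0_subsingleton_iff (A : Type) [CommRing A] (J : Ideal A)
    (M : Type) [AddCommGroup M] [Module A M] :
    Subsingleton ((localCohomology J 0).obj (ModuleCat.of A M)) ↔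
      ∀ (t : ℕ) (f : (A ⧸ J ^ t) →ₗ[A] M), f = 0 := by
  classical
  haveI := hasColimitDiagram.{0,0} (idealPowersDiagram J) 0
  let Dg := localCohomology.diagram (idealPowersDiagram J) 0
  let G : ℕᵒᵖᵒᵖ ⥤ ModuleCat A := Dg ⋙ (evaluation _ _).obj (ModuleCat.of A M)
  let e1 : (localCohomology J 0).obj (ModuleCat.of A M) ≅ colimit G :=
    colimitObjIsoColimitCompEvaluation Dg (ModuleCat.of A M)
  let F₀ : (ModuleCat A)ᵒᵖ ⥤ ModuleCat A := (linearYoneda A (ModuleCat A)).obj (ModuleCat.of A M)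
  haveI : PreservesLimits (F₀ ⋙ forget (ModuleCat A)) :=
    (inferInstance : PreservesLimits (yoneda.obj (ModuleCat.of A M)))
  haveI : PreservesLimits F₀ := preservesLimits_of_reflects_of_preserves F₀ (forget _)
  haveI : PreservesFiniteColimits F₀.rightOp := preservesFiniteColimits_rightOp F₀
  let α : F₀.rightOp.leftDerived 0 ≅ F₀.rightOp := Functor.leftDerivedZeroIsoSelf F₀.rightOp
  let Ψ : (ModuleCat A)ᵒᵖ ⥤ ModuleCat A := (F₀.rightOp.leftDerived 0).leftOp
  let β : Ψ ≅ F₀ :=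
    ({ hom := NatTrans.leftOp α.inv, inv := NatTrans.leftOp α.hom,
       hom_inv_id := by rw [← NatTrans.leftOp_comp, Iso.hom_inv_id]; rfl
       inv_hom_id := by rw [← NatTrans.leftOp_comp, Iso.inv_hom_id]; rfl } :
      Ψ ≅ F₀.rightOp.leftOp) ≪≫ eqToIso (Functor.rightOp_leftOp_eq F₀)
  let H : ℕᵒᵖᵒᵖ ⥤ ModuleCat A := (ringModIdeals (idealPowersDiagram J)).op ⋙ F₀
  let ε : G ≅ H := Functor.isoWhiskerLeft (ringModIdeals (idealPowersDiagram J)).op β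
  let η : H ⟶ (Functor.const ℕᵒᵖᵒᵖ).obj (ModuleCat.of A M) :=
    { app := fun j => ModuleCat.ofHom
        ((LinearMap.applyₗ (1 : A ⧸ J ^ (Opposite.unop (Opposite.unop j)))) ∘ₗ
          ModuleCat.homLinearEquiv.toLinearMap)
      naturality := fun j j' w => by
        ext (φ : H.obj j)
        simp [H, F₀, ringModIdeals, ModuleCat.ofHom, Linear.leftComp]
        show φ.hom (Submodule.mapQ _ _ LinearMap.id (Ideal.pow_le_pow_right (leOfHom w.unop.unop))
          (1 : A ⧸ (idealPowersDiagram J).obj (Opposite.unop j'))) = φ.hom (1 : A ⧸ J ^ (Opposite.unop (Opposite.unop j)))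
        exact congrArg φ.hom (mapQ_one' _ _ _) }
  let q := ((forget (ModuleCat A)).mapIso e1).toEquiv
  constructor
  · intro hsub t f
    haveI hcs : Subsingleton ((colimit G : ModuleCat A) : Type) := q.symm.subsingleton
    let c : Cocone G := { pt := ModuleCat.of A M, ι := ε.hom ≫ η }
    let d := colimit.desc G c
    let j : ℕᵒᵖᵒᵖ := Opposite.op (Opposite.op t)
    let x₀ : (H.obj j : Type) := ModuleCat.ofHom f
    let x : (G.obj j : Type) := ε.inv.app j x₀
    have hx : colimit.ι G j x = 0 := Subsingleton.elim _ _
    have key : colimit.ι G j ≫ d = c.ι.app j := colimit.ι_desc c j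
    have key2 : (c.ι.app j) x = d (colimit.ι G j x) := by rw [← key]; rfl
    have h1 : (c.ι.app j) x = f 1 := by
      show (η.app j) ((ε.hom.app j) ((ε.inv.app j) x₀)) = f 1
      have e2 := congrArg (fun (g : H.obj j ⟶ H.obj j) => g x₀) (ε.inv_hom_id_app j)
      have e3 : (ε.hom.app j) ((ε.inv.app j) x₀) = x₀ := e2
      rw [e3]
      rfl
    have hf1 : f 1 = 0 := by
      rw [← h1, key2, hx, map_zero]
    refine LinearMap.ext fun a => ?_
    obtain ⟨a, rfl⟩ := Ideal.Quotient.mk_surjective a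
    have hmk : (Ideal.Quotient.mk (J ^ t)) a = a • (1 : A ⧸ J ^ t) := by
      show Submodule.Quotient.mk a = a • Submodule.Quotient.mk (1 : A)
      rw [← Submodule.Quotient.mk_smul, smul_eq_mul, mul_one]
    rw [hmk, map_smul, hf1, smul_zero]
    rfl
  · intro h
    haveI hsub : ∀ (jj : ℕᵒᵖᵒᵖ), Subsingleton (H.obj jj : Type) := by
      intro jj
      constructor
      intro a b
      exact ModuleCat.hom_ext ((h (Opposite.unop (Opposite.unop jj)) a.hom).trans
        (h (Opposite.unop (Opposite.unop jj)) b.hom).symm)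
    have hz : ∀ (jj : ℕᵒᵖᵒᵖ), IsZero (G.obj jj) := fun jj =>
      (ModuleCat.isZero_of_subsingleton (H.obj jj)).of_iso (ε.app jj)
    have hzc : IsZero (colimit G) := by
      rw [IsZero.iff_id_eq_zero]
      exact colimit.hom_ext fun jj => (hz jj).eq_of_src _ _
    haveI : Subsingleton ((colimit G : ModuleCat A) : Type) := by
      have hid : 𝟙 (colimit G) = 0 := (IsZero.iff_id_eq_zero _).mp hzc
      constructor
      intro a b
      have ha : a = 0 := by
        have := congrArg (fun (g : colimit G ⟶ colimit G) => g a) hid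
        simpa using this
      have hb : b = 0 := by
        have := congrArg (fun (g : colimit G ⟶ colimit G) => g b) hid
        simpa using this
      rw [ha, hb]
    exact q.subsingleton


private theorem joint_inj {B : Type} [CommRing B] {M ω : Type} [AddCommGroup M] [Module B M]
    [AddCommGroup ω] [Module B ω] (S : Submonoid B) {r : ℕ}
    (f₀ : M →ₗ[B] (Fin r → ω)) (hf₀ : Function.Injective f₀)
    (x : LocalizedModule S M)
    (hx : ∀ i : Fin r, LocalizedModule.map S ((LinearMap.proj i).comp f₀) x = 0) :
    x = 0 := by
  induction x using LocalizedModule.induction_on with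
  | _ m s =>
  have hmk : ∀ i : Fin r, ∃ c : S, (c : B) • (f₀ m i) = 0 := by
    intro i
    have h := hx i
    rw [LocalizedModule.map_mk] at h
    rw [← LocalizedModule.zero_mk s, LocalizedModule.mk_eq] at h
    obtain ⟨u, hu⟩ := h
    refine ⟨u * s, ?_⟩
    have h2 : (u : B) • (s : B) • (((LinearMap.proj i).comp f₀) m) = 0 := by
      simpa [Submonoid.smul_def] using hu
    have h3 : ((LinearMap.proj i).comp f₀) m = f₀ m i := rfl
    rw [h3] at h2
    rw [Submonoid.coe_mul, mul_smul]
    exact h2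
  choose c hc using hmk
  set T : S := ∏ i : Fin r, c i with hT
  have hTm : f₀ ((T : B) • m) = 0 := by
    rw [map_smul]
    funext i
    have hsplit : (T : B) = (∏ k ∈ Finset.univ.erase i, (c k : B)) * (c i : B) := by
      rw [hT, ← Finset.prod_erase_mul Finset.univ _ (Finset.mem_univ i)]
      push_cast
      rfl
    show (T : B) • (f₀ m) i = (0 : Fin r → ω) i
    rw [hsplit, mul_smul, hc i, smul_zero]
    simp
  have hm0 : (T : B) • m = 0 := hf₀ (by rw [hTm, map_zero])
  show LocalizedModule.mk m s = 0
  rw [← LocalizedModule.zero_mk s, LocalizedModule.mk_eq]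
  refine ⟨T, ?_⟩
  rw [Submonoid.smul_def, Submonoid.smul_def, Submonoid.smul_def, Submonoid.smul_def,
    smul_comm, hm0]
  simp


private theorem localDepth_ge_one_iff (A : Type) [CommRing A] [IsLocalRing A]
    (M : Type) [AddCommGroup M] [Module A M] :
    (1 : ℕ∞) ≤ localDepth A M ↔
      ∀ (t : ℕ) (f : (A ⧸ (IsLocalRing.maximalIdeal A) ^ t) →ₗ[A] M), f = 0 := by
  constructor
  · intro h1
    rw [← H0_subsingleton_iff]
    by_contra hns
    rw [not_subsingleton_iff_nontrivial] at hns
    have h0mem : (0 : ℕ∞) ∈ {n : ℕ∞ | ∃ m : ℕ, n = (m : ℕ∞) ∧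
        Nontrivial ((localCohomology (IsLocalRing.maximalIdeal A) m).obj (ModuleCat.of A M))} :=
      ⟨0, by simp, hns⟩
    have := le_trans h1 (sInf_le h0mem)
    simp at this
  · intro h
    refine le_sInf ?_
    rintro b ⟨m, rfl, hnt⟩
    match m with
    | 0 =>
      haveI := (H0_subsingleton_iff A (IsLocalRing.maximalIdeal A) M).mpr h
      exact absurd hnt (not_nontrivial_iff_subsingleton.mpr this)
    | (k + 1) =>
      exact_mod_cast Nat.one_le_iff_ne_zero.mpr (Nat.succ_ne_zero k)

end Aux

/-- **Submodules of sums of copies of a 1-canonical module (affine case).**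
Let `B` be a Noetherian ring (so `Z = Spec B` is affine locally Noetherian)
with a 1-canonical module `ω`, and `(−)^∨ = Hom_B(−, ω)`.  If a finite
`B`-module `M` is isomorphic to a submodule of a finite direct sum of copies
of `ω`, then `M` satisfies `(S'_1)` and `Supp M ⊆ Supp ω`.  Moreover, for any
finite `B`-module `N`, the dual `N^∨` embeds into a finite direct sum of
copies of `ω`. -/
theorem serreS'_one_of_embeds_in_canonical
    (B : Type) [CommRing B] [IsNoetherianRing B]
    (ω : Type) [AddCommGroup ω] [Module B ω]
    (hω : IsNCanonicalModule B ω 1)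
    (M : Type) [AddCommGroup M] [Module B M] [Module.Finite B M]
    (hM : ∃ (r : ℕ) (f : M →ₗ[B] (Fin r → ω)), Function.Injective f) :
    (SerreS' B M 1 ∧ Module.support B M ⊆ Module.support B ω) ∧
    (∀ (N : Type) (_ : AddCommGroup N) (_ : Module B N) (_ : Module.Finite B N),
      ∃ (r : ℕ) (g : (N →ₗ[B] ω) →ₗ[B] (Fin r → ω)), Function.Injective g) := by
  obtain ⟨r, f₀, hf₀⟩ := hM
  constructor
  · constructor
    · -- SerreS' B M 1
      intro P hP
      haveI := hP
      rcases le_or_gt (1 : WithBot ℕ∞) (primeKrullDim B P hP) with hd | hd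
      · have hω1 : (1 : ℕ∞) ≤ primeLocalDepth B P hP ω := by
          have := hω.2.1 P hP
          have h1d : (↑(1:ℕ) : WithBot ℕ∞) ⊓ primeKrullDim B P hP = ↑(1:ℕ) :=
            inf_eq_left.mpr (by exact_mod_cast hd)
          rw [h1d] at this
          exact_mod_cast this
        have hω0 := (localDepth_ge_one_iff (Localization.AtPrime P)
          (LocalizedModule P.primeCompl ω)).mp hω1
        have hM1 : (1 : ℕ∞) ≤ primeLocalDepth B P hP M := by
          refine (localDepth_ge_one_iff (Localization.AtPrime P)
            (LocalizedModule P.primeCompl M)).mpr ?_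
          intro t f
          refine LinearMap.ext fun y => ?_
          refine joint_inj P.primeCompl f₀ hf₀ (f y) fun i => ?_
          have hcomp : ((LocalizedModule.map P.primeCompl
              ((LinearMap.proj i).comp f₀)).comp f) = 0 := hω0 t _
          have := LinearMap.congr_fun hcomp y
          simpa using this
        exact le_trans inf_le_left (by exact_mod_cast hM1)
      · -- dim < 1 case
        have hd0 : primeKrullDim B P hP ≤ 0 := by
          cases h' : primeKrullDim B P hP with
          | bot => exact bot_le
          | coe e =>
            rw [h'] at hd
            have he : e < 1 := by exact_mod_cast hd
            have he0 : e = 0 := ENat.lt_one_iff_eq_zero.mp he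
            rw [he0]
            exact le_refl _
        refine le_trans (min_le_right _ _) (le_trans hd0 ?_)
        exact_mod_cast (zero_le : 0 ≤ primeLocalDepth B P hP M)
    · -- support
      intro p hp
      by_contra hpω
      rw [Module.notMem_support_iff] at hpω
      rw [Module.mem_support_iff] at hp
      have hsub : Subsingleton (LocalizedModule p.asIdeal.primeCompl M) := by
        constructor
        intro a b
        have ha : a = 0 := joint_inj p.asIdeal.primeCompl f₀ hf₀ a
          (fun i => Subsingleton.elim _ _)
        have hb : b = 0 := joint_inj p.asIdeal.primeCompl f₀ hf₀ b
          (fun i => Subsingleton.elim _ _)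
        rw [ha, hb]
      exact absurd hp (not_nontrivial_iff_subsingleton.mpr hsub)
  · intro N _ _ _
    obtain ⟨n, s, hs⟩ := Module.Finite.exists_fin (R := B) (M := N)
    refine ⟨n, LinearMap.pi (fun i => LinearMap.applyₗ (s i)), ?_⟩
    intro φ ψ h
    refine LinearMap.ext_on hs fun x hx => ?_
    obtain ⟨i, rfl⟩ := hx
    have := congrFun h i
    simpa using this
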